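/- Let F:Ω→Y be continuously differentiable on an open set Ω of a Hilbert space X containing the segment from x* to x, and suppose β‖F'(y) − F'(x*+τ(y−x*))‖ ≤ f'(‖y−x*‖) − f'(τ‖y−x*‖) for all τ∈[0,1] and y in the ball B(x*,δ), where f:[0,R)→ℝ is continuously differentiable. Then for x ∈ B(x*,δ), β‖F(x*) − F(x) − F'(x)(x*−x)‖ ≤ f(0) − f(‖x−x*‖) + f'(‖x−x*‖)‖x−x*‖. -/

import Mathlib

/-- Under the majorant condition, the linearization error of `F` at `x ∈ B(x*, δ)`
is bounded by the linearization error of the majorant function: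
`β ‖E_F(x, x*)‖ ≤ e_f(‖x - x*‖, 0) = f(0) - f(‖x-x*‖) + f'(‖x-x*‖)‖x-x*‖`. -/
theorem stmt_17 {X Y : Type*}
    [NormedAddCommGroup X] [InnerProductSpace ℝ X] [CompleteSpace X]
    [NormedAddCommGroup Y] [InnerProductSpace ℝ Y] [CompleteSpace Y]
    (Ω : Set X) (hΩ : IsOpen Ω)
    (F : X → Y) (F' : X → X →L[ℝ] Y)
    (hF : ∀ y ∈ Ω, HasFDerivAt F (F' y) y) (hFc : ContinuousOn F' Ω)
    (xs : X) (hxs : xs ∈ Ω)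
    (β δ R : ℝ) (hβ : 0 < β) (hδ : 0 < δ) (hδR : δ ≤ R)
    (hball : Metric.ball xs δ ⊆ Ω)
    (f f' : ℝ → ℝ) (hf : ∀ s ∈ Set.Ico 0 R, HasDerivAt f (f' s) s)
    (hf'c : ContinuousOn f' (Set.Ico 0 R))
    (hmaj : ∀ y ∈ Metric.ball xs δ, ∀ τ ∈ Set.Icc (0 : ℝ) 1,
      β * ‖F' y - F' (xs + τ • (y - xs))‖ ≤ f' ‖y - xs‖ - f' (τ * ‖y - xs‖))
    (x : X) (hx : x ∈ Metric.ball xs δ) :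
    β * ‖F xs - F x - F' x (xs - x)‖ ≤
      f 0 - f ‖x - xs‖ + f' ‖x - xs‖ * ‖x - xs‖ := by
  have hdist : ‖x - xs‖ < δ := by
    rw [← dist_eq_norm]; exact Metric.mem_ball.mp hx
  set t : ℝ := ‖x - xs‖ with ht
  have ht0 : 0 ≤ t := norm_nonneg _
  set γ : ℝ → X := fun σ => x + σ • (xs - x) with hγ
  have hγeq : ∀ σ : ℝ, γ σ = xs + (1 - σ) • (x - xs) := by
    intro σ; simp only [hγ]; module
  have hγmem : ∀ σ ∈ Set.Icc (0:ℝ) 1, γ σ ∈ Metric.ball xs δ := by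
    intro σ hσ
    have h1 : γ σ - xs = (1 - σ) • (x - xs) := by rw [hγeq]; abel
    rw [Metric.mem_ball, dist_eq_norm, h1, norm_smul, Real.norm_eq_abs,
      abs_of_nonneg (by linarith [hσ.2] : (0:ℝ) ≤ 1 - σ)]
    nlinarith [hσ.1, hσ.2]
  have hγΩ : ∀ σ ∈ Set.Icc (0:ℝ) 1, γ σ ∈ Ω := fun σ hσ => hball (hγmem σ hσ)
  have hγcont : Continuous γ := by fun_prop
  -- derivative of F ∘ γ
  have hderiv : ∀ σ ∈ Set.Icc (0:ℝ) 1,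
      HasDerivAt (fun σ => F (γ σ)) (F' (γ σ) (xs - x)) σ := by
    intro σ hσ
    have h1 : HasDerivAt γ (xs - x) σ := by
      have := ((hasDerivAt_id σ).smul_const (xs - x)).const_add x
      simpa [hγ] using this
    exact (hF (γ σ) (hγΩ σ hσ)).comp_hasDerivAt σ h1
  have hcont1 : ContinuousOn (fun σ => F' (γ σ) (xs - x)) (Set.Icc (0:ℝ) 1) := by
    exact ((hFc.comp hγcont.continuousOn hγΩ).clm_apply continuousOn_const)
  have hint1 : IntervalIntegrable (fun σ => F' (γ σ) (xs - x))
      MeasureTheory.volume 0 1 := by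
    apply ContinuousOn.intervalIntegrable
    rwa [Set.uIcc_of_le zero_le_one]
  have hFTC : F xs - F x = ∫ σ in (0:ℝ)..1, F' (γ σ) (xs - x) := by
    have := intervalIntegral.integral_eq_sub_of_hasDerivAt
      (f := fun σ => F (γ σ)) (f' := fun σ => F' (γ σ) (xs - x))
      (by rw [Set.uIcc_of_le zero_le_one]; exact hderiv) hint1
    rw [this]
    simp [hγ]
  -- error as integral
  have hE : F xs - F x - F' x (xs - x)
      = ∫ σ in (0:ℝ)..1, (F' (γ σ) (xs - x) - F' x (xs - x)) := by
    rw [intervalIntegral.integral_sub hint1 (intervalIntegrable_const),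
      intervalIntegral.integral_const, ← hFTC]
    simp
  -- pointwise bound
  have hbound : ∀ σ ∈ Set.Icc (0:ℝ) 1,
      β * ‖F' (γ σ) (xs - x) - F' x (xs - x)‖ ≤ (f' t - f' ((1 - σ) * t)) * t := by
    intro σ hσ
    have hmem : (1 - σ) ∈ Set.Icc (0:ℝ) 1 := ⟨by linarith [hσ.2], by linarith [hσ.1]⟩
    have hm := hmaj x hx (1 - σ) hmem
    have hop : ‖F' (γ σ) (xs - x) - F' x (xs - x)‖
        ≤ ‖F' x - F' (xs + (1 - σ) • (x - xs))‖ * ‖xs - x‖ := by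
      have h1 : F' (γ σ) (xs - x) - F' x (xs - x)
          = (F' (γ σ) - F' x) (xs - x) := by simp
      rw [h1]
      calc ‖(F' (γ σ) - F' x) (xs - x)‖ ≤ ‖F' (γ σ) - F' x‖ * ‖xs - x‖ :=
            (F' (γ σ) - F' x).le_opNorm _
        _ = ‖F' x - F' (xs + (1 - σ) • (x - xs))‖ * ‖xs - x‖ := by
            rw [norm_sub_rev, hγeq]
    have hts : ‖xs - x‖ = t := norm_sub_rev xs x
    calc β * ‖F' (γ σ) (xs - x) - F' x (xs - x)‖
        ≤ β * (‖F' x - F' (xs + (1 - σ) • (x - xs))‖ * t) := by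
          rw [← hts]; exact mul_le_mul_of_nonneg_left hop hβ.le
      _ = (β * ‖F' x - F' (xs + (1 - σ) • (x - xs))‖) * t := by ring
      _ ≤ (f' t - f' ((1 - σ) * t)) * t := mul_le_mul_of_nonneg_right hm ht0
  -- integrability of bound
  have hmapsTo : ∀ σ ∈ Set.Icc (0:ℝ) 1, (1 - σ) * t ∈ Set.Ico 0 R := by
    intro σ hσ
    constructor
    · exact mul_nonneg (by linarith [hσ.2]) ht0
    · nlinarith [hσ.1, hσ.2]
  have hcont2 : ContinuousOn (fun σ => (f' t - f' ((1 - σ) * t)) * t)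
      (Set.Icc (0:ℝ) 1) := by
    apply ContinuousOn.mul _ continuousOn_const
    apply ContinuousOn.sub continuousOn_const
    exact hf'c.comp (by fun_prop) hmapsTo
  have hint2 : IntervalIntegrable (fun σ => (f' t - f' ((1 - σ) * t)) * t)
      MeasureTheory.volume 0 1 := by
    apply ContinuousOn.intervalIntegrable
    rwa [Set.uIcc_of_le zero_le_one]
  have hintβ : IntervalIntegrable (fun σ => β * ‖F' (γ σ) (xs - x) - F' x (xs - x)‖)
      MeasureTheory.volume 0 1 := by
    apply ContinuousOn.intervalIntegrable
    rw [Set.uIcc_of_le zero_le_one]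
    exact continuousOn_const.mul (hcont1.sub continuousOn_const).norm
  -- value of bound integral
  have hGderiv : ∀ σ ∈ Set.uIcc (0:ℝ) 1,
      HasDerivAt (fun σ => f' t * t * σ + f ((1 - σ) * t))
        ((f' t - f' ((1 - σ) * t)) * t) σ := by
    rw [Set.uIcc_of_le zero_le_one]
    intro σ hσ
    have h1 : HasDerivAt (fun σ : ℝ => f' t * t * σ) (f' t * t) σ := by
      simpa using (hasDerivAt_id σ).const_mul (f' t * t)
    have h2 : HasDerivAt (fun σ : ℝ => (1 - σ) * t) (-t) σ := by
      have := ((hasDerivAt_id σ).const_sub 1).mul_const t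
      simpa using this
    have h3 : HasDerivAt (fun σ => f ((1 - σ) * t)) (f' ((1 - σ) * t) * (-t)) σ :=
      (hf _ (hmapsTo σ hσ)).comp σ h2
    have := h1.add h3
    exact this.congr_deriv (by ring)
  have hIval : (∫ σ in (0:ℝ)..1, (f' t - f' ((1 - σ) * t)) * t)
      = f 0 - f t + f' t * t := by
    rw [intervalIntegral.integral_eq_sub_of_hasDerivAt hGderiv hint2]
    simp
    ring
  -- combine
  calc β * ‖F xs - F x - F' x (xs - x)‖
      ≤ β * ∫ σ in (0:ℝ)..1, ‖F' (γ σ) (xs - x) - F' x (xs - x)‖ := by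
        rw [hE]
        exact mul_le_mul_of_nonneg_left
          (intervalIntegral.norm_integral_le_integral_norm zero_le_one) hβ.le
    _ = ∫ σ in (0:ℝ)..1, β * ‖F' (γ σ) (xs - x) - F' x (xs - x)‖ := by
        rw [← intervalIntegral.integral_const_mul]
    _ ≤ ∫ σ in (0:ℝ)..1, (f' t - f' ((1 - σ) * t)) * t := by
        apply intervalIntegral.integral_mono_on zero_le_one hintβ hint2 hbound
    _ = f 0 - f t + f' t * t := hIval
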